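/- Symmetric mountain-pass (inf-sup) principle. In the abstract symmetrization framework, assume additionally that Θ : (X,‖·‖) → (S,‖·‖) is continuous, that the extended polarization and symmetrization fix the origin (0^H = 0 for all H ∈ ℋ* and 0* = 0), and let ψ ∈ S satisfy ψ^H = ψ for all H ∈ ℋ*. Let f : X → ℝ be of class C¹ with f(u^H) ≤ f(u) for all u ∈ X and all H ∈ ℋ*. Let Ŝ := {γ ∈ C([0,1], X) : γ(0) = 0, γ(1) = ψ} and c := inf_{γ ∈ Ŝ} max_{t ∈ [0,1]} f(γ(t)), and assume c > max{f(0), f(ψ)}. Then for every ε > 0 there exists u_ε ∈ X such that ‖u_ε − u_ε*‖_V < ε, ‖df(u_ε)‖_{X'} ≤ ε, and c ≤ f(u_ε) ≤ c + ε. -/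

import Mathlib

open Filter Topology Metric Set

set_option linter.unusedSectionVars false
set_option linter.deprecated false
set_option maxHeartbeats 2000000

noncomputable section MPAux

abbrev MPII : Type := Set.Icc (0:ℝ) 1

variable {X : Type*} [NormedAddCommGroup X] [NormedSpace ℝ X]

def PhiSup (f : X → ℝ) (γ : C(MPII, X)) : ℝ := sSup (f '' Set.range γ)

lemma phi_bddAbove {f : X → ℝ} (hf : Continuous f) (γ : C(MPII, X)) :
    BddAbove (f '' Set.range γ) :=
  ((isCompact_range γ.continuous).image hf).bddAbove

lemma phi_le {f : X → ℝ} (hf : Continuous f) (γ : C(MPII, X)) (t : MPII) :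
    f (γ t) ≤ PhiSup f γ :=
  le_csSup (phi_bddAbove hf γ) ⟨γ t, mem_range_self t, rfl⟩

lemma phi_attained {f : X → ℝ} (hf : Continuous f) (γ : C(MPII, X)) :
    ∃ t, f (γ t) = PhiSup f γ := by
  have hne : (f '' Set.range γ).Nonempty :=
    ⟨f (γ ⟨0, by norm_num⟩), ⟨γ ⟨0, by norm_num⟩, mem_range_self _, rfl⟩⟩
  have := ((isCompact_range γ.continuous).image hf).sSup_mem hne
  obtain ⟨u, ⟨t, rfl⟩, hu⟩ := this
  exact ⟨t, hu⟩

lemma phi_le_of_forall {f : X → ℝ} (γ : C(MPII, X)) {b : ℝ}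
    (h : ∀ t, f (γ t) ≤ b) : PhiSup f γ ≤ b := by
  refine csSup_le ⟨f (γ ⟨0, by norm_num⟩), Set.mem_image_of_mem f (mem_range_self _)⟩ ?_
  rintro r ⟨u, ⟨t, rfl⟩, rfl⟩
  exact h t

lemma phi_lsc {f : X → ℝ} (hf : Continuous f) :
    LowerSemicontinuous (PhiSup f) := by
  intro γ₀ y hy
  obtain ⟨t, ht⟩ := phi_attained hf γ₀
  have hcont : Continuous fun γ : C(MPII, X) => f (γ t) :=
    hf.comp (continuous_eval_const t)
  have hev : ∀ᶠ γ in 𝓝 γ₀, y < f (γ t) :=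
    hcont.continuousAt.eventually (eventually_gt_nhds (lt_of_lt_of_le hy ht.ge))
  exact hev.mono fun γ hγ => lt_of_lt_of_le hγ (phi_le hf γ t)

/-- Ekeland variational principle (weak form). -/
theorem my_ekeland {α : Type*} [MetricSpace α] [CompleteSpace α]
    (Φ : α → ℝ) (hΦ : LowerSemicontinuous Φ) (b : ℝ) (hb : ∀ x, b ≤ Φ x)
    (σ : ℝ) (hσ : 0 < σ) (x₀ : α) :
    ∃ z, Φ z ≤ Φ x₀ ∧ σ * dist x₀ z ≤ Φ x₀ - Φ z ∧
      ∀ y, Φ z ≤ Φ y + σ * dist z y := by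
  classical
  set D : α → Set α := fun x => {y | Φ y + σ * dist x y ≤ Φ x} with hD
  have hxD : ∀ x, x ∈ D x := by intro x; simp [hD]
  have hDne : ∀ x, (D x).Nonempty := fun x => ⟨x, hxD x⟩
  have hbdd : ∀ x, BddBelow (Φ '' D x) := by
    intro x; exact ⟨b, by rintro r ⟨y, _, rfl⟩; exact hb y⟩
  have hstep : ∀ (x : α) (n : ℕ), ∃ y ∈ D x,
      Φ y < sInf (Φ '' D x) + (1/2)^n := by
    intro x n
    obtain ⟨r, ⟨y, hy, rfl⟩, hr⟩ := Real.lt_sInf_add_pos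
      ((hDne x).image Φ) (ε := (1/2)^n) (by positivity)
    exact ⟨y, hy, hr⟩
  choose nxt hnxt1 hnxt2 using hstep
  set x : ℕ → α := fun n => Nat.rec x₀ (fun n xn => nxt xn n) n with hx
  have hxsucc : ∀ n, x (n+1) = nxt (x n) n := fun n => rfl
  have hmemD : ∀ n, x (n+1) ∈ D (x n) := fun n => by
    rw [hxsucc]; exact hnxt1 (x n) n
  have hDmono : ∀ {u v : α}, v ∈ D u → D v ⊆ D u := by
    intro u v hv y hy
    simp only [hD, Set.mem_setOf_eq] at *
    have h3 := dist_triangle u v y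
    nlinarith [h3]
  have hDchain : ∀ n m, n ≤ m → x m ∈ D (x n) := by
    intro n m h
    induction m with
    | zero => have : n = 0 := Nat.le_zero.mp h; rw [this]; exact hxD _
    | succ m ih =>
      rcases Nat.lt_or_ge n (m+1) with h' | h'
      · exact hDmono (ih (by omega)) (hmemD m)
      · have : n = m + 1 := le_antisymm h h'
        rw [this]; exact hxD _
  have hchain' : ∀ n m, n ≤ m → Φ (x m) + σ * dist (x n) (x m) ≤ Φ (x n) :=
    fun n m h => hDchain n m h
  have hanti : Antitone fun n => Φ (x n) := by
    intro n m h
    have := hchain' n m h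
    nlinarith [dist_nonneg (x := x n) (y := x m)]
  have hbddb : BddBelow (Set.range fun n => Φ (x n)) :=
    ⟨b, by rintro r ⟨n, rfl⟩; exact hb _⟩
  set ℓ : ℝ := ⨅ n, Φ (x n) with hℓ
  have hlim : Tendsto (fun n => Φ (x n)) atTop (𝓝 ℓ) :=
    tendsto_atTop_ciInf hanti hbddb
  have hℓle : ∀ n, ℓ ≤ Φ (x n) := fun n => ciInf_le hbddb n
  -- Cauchy
  have hcb : Tendsto (fun N => (Φ (x N) - ℓ)/σ) atTop (𝓝 0) := by
    have := (hlim.sub (tendsto_const_nhds (x := ℓ))).div_const σ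
    simpa using this
  have hcauchy : CauchySeq x := by
    apply cauchySeq_of_le_tendsto_0 (fun N => (Φ (x N) - ℓ)/σ) _ hcb
    intro n m N hn hm
    have key : ∀ p q, N ≤ p → p ≤ q → dist (x p) (x q) ≤ (Φ (x N) - ℓ)/σ := by
      intro p q hp hpq
      have h1 := hchain' p q hpq
      have h2 := hanti hp
      have h3 := hℓle q
      rw [le_div_iff₀ hσ]
      nlinarith
    rcases le_total n m with h | h
    · exact key n m hn h
    · rw [dist_comm]; exact key m n hm h
  obtain ⟨z, hz⟩ := cauchySeq_tendsto_of_complete hcauchy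
  have hΦzℓ : Φ z ≤ ℓ := by
    by_contra hcon
    push_neg at hcon
    obtain ⟨y, hy1, hy2⟩ := exists_between hcon
    have h1 : ∀ᶠ n in atTop, y < Φ (x n) :=
      hz.eventually (hΦ z y hy2)
    have h2 : ∀ᶠ n in atTop, Φ (x n) < y :=
      hlim.eventually (eventually_lt_nhds hy1)
    obtain ⟨n, hn1, hn2⟩ := (h1.and h2).exists
    linarith
  have hA : ∀ n, Φ z + σ * dist (x n) z ≤ Φ (x n) := by
    intro n
    have htend : Tendsto (fun m => Φ (x m) + σ * dist (x n) (x m)) atTop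
        (𝓝 (ℓ + σ * dist (x n) z)) :=
      hlim.add ((tendsto_const_nhds.dist hz).const_mul σ)
    have hev : ∀ᶠ m in atTop, Φ (x m) + σ * dist (x n) (x m) ≤ Φ (x n) :=
      eventually_atTop.mpr ⟨n, fun m hm => hchain' n m hm⟩
    have := le_of_tendsto htend hev
    linarith
  have hx0 : x 0 = x₀ := rfl
  have h0 := hA 0
  rw [hx0] at h0
  refine ⟨z, ?_, ?_, ?_⟩
  · have := dist_nonneg (x := x₀) (y := z); nlinarith
  · linarith
  · intro y
    by_contra hcon
    push_neg at hcon
    have hyD : ∀ n, y ∈ D (x n) := by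
      intro n
      simp only [hD, Set.mem_setOf_eq]
      have h1 := dist_triangle (x n) z y
      have h2 := hA n
      nlinarith
    have hkey : ∀ n : ℕ, Φ z ≤ Φ y + (1/2)^n := by
      intro n
      have h1 : sInf (Φ '' D (x n)) ≤ Φ y := csInf_le (hbdd _) ⟨y, hyD n, rfl⟩
      have h2 : Φ (x (n+1)) < sInf (Φ '' D (x n)) + (1/2)^n := by
        rw [hxsucc]; exact hnxt2 (x n) n
      have h3 := hℓle (n+1)
      linarith [hΦzℓ]
    have hfin : Φ z ≤ Φ y := by
      have htend : Tendsto (fun n : ℕ => Φ y + (1/2:ℝ)^n) atTop (𝓝 (Φ y + 0)) :=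
        tendsto_const_nhds.add (tendsto_pow_atTop_nhds_zero_of_lt_one (by norm_num) (by norm_num))
      have := ge_of_tendsto htend (Eventually.of_forall hkey)
      linarith
    rcases eq_or_ne y z with rfl | hne
    · simp at hcon
    · have : 0 < dist z y := dist_pos.mpr (Ne.symm hne)
      nlinarith


def mpe0 : MPII := ⟨0, by norm_num⟩
def mpe1 : MPII := ⟨1, by norm_num⟩


lemma mvt_aux (φ dφ : ℝ → ℝ) (s a : ℝ) (hs : 0 ≤ s)
    (hφ : ∀ τ ∈ Set.Icc 0 s, HasDerivAt φ (dφ τ) τ)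
    (hb : ∀ τ ∈ Set.Icc 0 s, dφ τ ≤ a) :
    φ s ≤ φ 0 + a * s := by
  have hq : AntitoneOn (fun τ => φ τ - a * τ) (Set.Icc 0 s) := by
    apply antitoneOn_of_deriv_nonpos (convex_Icc 0 s)
    · intro x hx
      exact ((hφ x hx).sub ((hasDerivAt_id x).const_mul a)).continuousAt.continuousWithinAt
    · intro x hx
      rw [interior_Icc] at hx
      exact ((hφ x (Ioo_subset_Icc_self hx)).sub
        ((hasDerivAt_id x).const_mul a)).differentiableAt.differentiableWithinAt
    · intro x hx
      rw [interior_Icc] at hx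
      have hd := ((hφ x (Ioo_subset_Icc_self hx)).sub
        ((hasDerivAt_id x).const_mul a)).deriv
      simp only [id_eq] at hd
      rw [show deriv (fun τ => φ τ - a * τ) x = dφ x - a * 1 from hd]
      have := hb x (Ioo_subset_Icc_self hx)
      simp only [mul_one]
      linarith
  have := hq (Set.left_mem_Icc.mpr hs) (Set.right_mem_Icc.mpr hs) hs
  simp only [mul_zero, sub_zero] at this
  linarith

theorem minimax_deriv
    (f : X → ℝ) (hf : ContDiff ℝ 1 f)
    (γ : C(MPII, X)) (σ : ℝ) (hσ : 0 < σ)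
    (hEk : ∀ γ' : C(MPII, X), γ' mpe0 = γ mpe0 → γ' mpe1 = γ mpe1 →
      PhiSup f γ ≤ PhiSup f γ' + σ * dist γ γ')
    (h0 : f (γ mpe0) < PhiSup f γ)
    (h1 : f (γ mpe1) < PhiSup f γ) :
    ∃ t, f (γ t) = PhiSup f γ ∧ ‖fderiv ℝ f (γ t)‖ ≤ 2 * σ := by
  classical
  by_contra hcon
  push_neg at hcon
  set Φ := PhiSup f γ with hΦdef
  set M : Set MPII := {t | f (γ t) = Φ} with hMdef
  have hMne : M.Nonempty := phi_attained hf.continuous γ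
  have hfγcont : Continuous fun t : MPII => f (γ t) := hf.continuous.comp γ.continuous
  have hMclosed : IsClosed M := isClosed_eq hfγcont continuous_const
  have hMcompact : IsCompact M := hMclosed.isCompact
  -- directions
  have hdir : ∀ m : MPII, m ∈ M → ∃ vv : X, ‖vv‖ ≤ 1 ∧ fderiv ℝ f (γ m) vv < -(2*σ) := by
    intro m hm
    have h2 : 2*σ < ‖fderiv ℝ f (γ m)‖ := hcon m hm
    by_contra hno
    push_neg at hno
    have hbound : ‖fderiv ℝ f (γ m)‖ ≤ 2*σ := by
      apply ContinuousLinearMap.opNorm_le_bound _ (by positivity)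
      intro x
      rcases eq_or_ne x 0 with rfl | hx
      · simp
      · have hxn : 0 < ‖x‖ := norm_pos_iff.mpr hx
        set vv : X := ‖x‖⁻¹ • x with hvv
        have hvn : ‖vv‖ ≤ 1 := by
          rw [hvv, norm_smul, norm_inv, norm_norm, inv_mul_cancel₀ hxn.ne']
        have h1' := hno vv hvn
        have h2' := hno (-vv) (by rwa [norm_neg])
        rw [map_neg] at h2'
        have habs : |fderiv ℝ f (γ m) vv| ≤ 2*σ := abs_le.mpr ⟨by linarith, by linarith⟩
        have hval : fderiv ℝ f (γ m) vv = ‖x‖⁻¹ * fderiv ℝ f (γ m) x := by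
          rw [hvv, map_smul]; simp
        rw [hval, abs_mul, abs_inv, abs_norm] at habs
        rw [Real.norm_eq_abs]
        calc |fderiv ℝ f (γ m) x| = ‖x‖ * (‖x‖⁻¹ * |fderiv ℝ f (γ m) x|) := by
              field_simp
          _ ≤ ‖x‖ * (2*σ) := mul_le_mul_of_nonneg_left habs (norm_nonneg x)
          _ = 2*σ*‖x‖ := by ring
    linarith
  choose! v hv1 hv2 using hdir
  have hdfc : ∀ m : MPII, Continuous fun u : X => fderiv ℝ f u (v m) := fun m =>
    ((ContinuousLinearMap.apply ℝ ℝ (v m)).continuous).comp (hf.continuous_fderiv one_ne_zero)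
  have hrad : ∀ m : MPII, m ∈ M → ∃ rr, 0 < rr ∧
      ∀ u : X, ‖u - γ m‖ < rr → fderiv ℝ f u (v m) < -(2*σ) := by
    intro m hm
    have hopen : IsOpen {u : X | fderiv ℝ f u (v m) < -(2*σ)} :=
      isOpen_lt (hdfc m) continuous_const
    obtain ⟨rr, hr, hball⟩ := Metric.isOpen_iff.mp hopen (γ m) (hv2 m hm)
    exact ⟨rr, hr, fun u hu => hball (by rwa [mem_ball, dist_eq_norm])⟩
  choose! r hr0 hrball using hrad
  -- subtype versions
  have hv1' : ∀ i : M, ‖v i‖ ≤ 1 := fun i => hv1 i i.2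
  have hr0' : ∀ i : M, 0 < r i := fun i => hr0 i i.2
  have hrball' : ∀ i : M, ∀ u : X, ‖u - γ i‖ < r i → fderiv ℝ f u (v i) < -(2*σ) :=
    fun i => hrball i i.2
  -- open cover of M
  set U : M → Set MPII := fun m =>
    {t | ‖γ t - γ (m : MPII)‖ < r m / 2} ∩ ({mpe0}ᶜ ∩ {mpe1}ᶜ) with hUdef
  have hUopen : ∀ m, IsOpen (U m) := by
    intro m
    apply IsOpen.inter
    · exact isOpen_lt (continuous_norm.comp ((γ.continuous.sub continuous_const))) continuous_const
    · exact (isClosed_singleton.isOpen_compl).inter isClosed_singleton.isOpen_compl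
  have hMe0 : (mpe0 : MPII) ∉ M := by
    simp only [hMdef, mem_setOf_eq]; intro hm; linarith
  have hMe1 : (mpe1 : MPII) ∉ M := by
    simp only [hMdef, mem_setOf_eq]; intro hm; linarith
  have hmemU : ∀ m : M, (m : MPII) ∈ U m := by
    intro m
    refine ⟨by simpa using half_pos (hr0' m), ?_, ?_⟩
    · simp only [mem_compl_iff, mem_singleton_iff]
      intro h; exact hMe0 (h ▸ m.2)
    · simp only [mem_compl_iff, mem_singleton_iff]
      intro h; exact hMe1 (h ▸ m.2)
  have hcover : M ⊆ ⋃ m : M, U m := fun m hm =>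
    Set.mem_iUnion.mpr ⟨⟨m, hm⟩, hmemU ⟨m, hm⟩⟩
  obtain ⟨T, hT⟩ := hMcompact.elim_finite_subcover U hUopen hcover
  have hTne : T.Nonempty := by
    obtain ⟨m, hm⟩ := hMne
    obtain ⟨i, hi, _⟩ := Set.mem_iUnion₂.mp (hT hm)
    exact ⟨i, hi⟩
  -- thickening
  set Uall : Set MPII := ⋃ i ∈ T, U i with hUall
  have hUallopen : IsOpen Uall := isOpen_biUnion (fun i _ => hUopen i)
  obtain ⟨δth, hδth, hthick⟩ := hMcompact.exists_thickening_subset_open hUallopen hT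
  set ρ : ℝ := δth / 2 with hρdef
  have hρ : 0 < ρ := by positivity
  set g : MPII → ℝ := fun t => infDist t M with hgdef
  have hgcont : Continuous g := continuous_infDist_pt M
  have hgnonneg : ∀ t, 0 ≤ g t := fun t => infDist_nonneg
  have hgsub : ∀ t, g t ≤ ρ → t ∈ Uall := by
    intro t ht
    apply hthick
    rw [mem_thickening_iff_infDist_lt hMne]
    calc infDist t M ≤ ρ := ht
      _ < δth := by rw [hρdef]; linarith
  set χ : M → MPII → ℝ := fun i t => infDist t (U i)ᶜ with hχdef
  have hχcont : ∀ i, Continuous (χ i) := fun i => continuous_infDist_pt _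
  have hχnonneg : ∀ i t, 0 ≤ χ i t := fun i t => infDist_nonneg
  have hχpos : ∀ i t, t ∈ U i → 0 < χ i t := by
    intro i t ht
    have hcne : ((U i)ᶜ : Set MPII).Nonempty := ⟨mpe0, fun hc => hc.2.1 rfl⟩
    exact ((hUopen i).isClosed_compl.notMem_iff_infDist_pos hcne).mp (by simpa using ht)
  have hχzero : ∀ i t, t ∉ U i → χ i t = 0 := fun i t ht =>
    infDist_zero_of_mem (by simpa using ht)
  set ζ : MPII → ℝ := fun t => max 0 (1 - g t / ρ) with hζdef
  have hζcont : Continuous ζ :=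
    continuous_const.max (continuous_const.sub (hgcont.div_const ρ))
  have hζnonneg : ∀ t, 0 ≤ ζ t := fun t => le_max_left 0 _
  have hζle : ∀ t, ζ t ≤ 1 := by
    intro t
    apply max_le (by norm_num)
    have h1 : 0 ≤ g t / ρ := div_nonneg (hgnonneg t) hρ.le
    linarith
  set ex : MPII → ℝ := fun t => max 0 (g t - ρ) with hexdef
  have hexcont : Continuous ex := continuous_const.max (hgcont.sub continuous_const)
  have hexnonneg : ∀ t, 0 ≤ ex t := fun t => le_max_left 0 _
  set den : MPII → ℝ := fun t => (∑ i ∈ T, χ i t) + ex t with hdendef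
  have hdencont : Continuous den :=
    (continuous_finset_sum T fun i _ => hχcont i).add hexcont
  have hsumχnonneg : ∀ t, 0 ≤ ∑ i ∈ T, χ i t := fun t =>
    Finset.sum_nonneg fun i _ => hχnonneg i t
  have hdenpos : ∀ t, 0 < den t := by
    intro t
    rcases le_or_gt (g t) ρ with h | h
    · obtain ⟨i, hiT, hiU⟩ := Set.mem_iUnion₂.mp (hgsub t h)
      have h1 : 0 < χ i t := hχpos i t hiU
      have hle : χ i t ≤ ∑ j ∈ T, χ j t :=
        Finset.single_le_sum (fun j _ => hχnonneg j t) hiT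
      have h2 := hexnonneg t
      simp only [hdendef]
      linarith
    · have h1 : 0 < ex t := lt_of_lt_of_le (by linarith) (le_max_right 0 _)
      have h2 := hsumχnonneg t
      simp only [hdendef]
      linarith
  set w : M → MPII → ℝ := fun i t => ζ t * χ i t / den t with hwdef
  have hwcont : ∀ i, Continuous (w i) :=
    fun i => ((hζcont.mul (hχcont i)).div hdencont fun t => (hdenpos t).ne')
  have hwnonneg : ∀ i t, 0 ≤ w i t := fun i t =>
    div_nonneg (mul_nonneg (hζnonneg t) (hχnonneg i t)) (hdenpos t).le
  have hwsumform : ∀ t, ∑ i ∈ T, w i t = ζ t * (∑ i ∈ T, χ i t) / den t := by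
    intro t
    simp only [hwdef]
    rw [← Finset.sum_div, ← Finset.mul_sum]
  have hwsum_le : ∀ t, ∑ i ∈ T, w i t ≤ 1 := by
    intro t
    rw [hwsumform t, div_le_one (hdenpos t)]
    have h2 : ζ t * (∑ i ∈ T, χ i t) ≤ ∑ i ∈ T, χ i t := by
      nlinarith [hζle t, hζnonneg t, hsumχnonneg t]
    have h3 := hexnonneg t
    simp only [hdendef]
    linarith
  have hwsum_ge : ∀ t, g t ≤ ρ/4 → (3:ℝ)/4 ≤ ∑ i ∈ T, w i t := by
    intro t ht
    have hζt : (3:ℝ)/4 ≤ ζ t := by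
      apply le_max_of_le_right
      have hd : g t / ρ ≤ 1/4 := by rw [div_le_iff₀ hρ]; linarith
      linarith
    have hex0 : ex t = 0 := max_eq_left (by linarith)
    have hden : den t = ∑ i ∈ T, χ i t := by simp only [hdendef]; rw [hex0]; ring
    have hpos : 0 < ∑ i ∈ T, χ i t := by
      have := hdenpos t; rw [hden] at this; exact this
    rw [hwsumform t, hden, mul_div_assoc, div_self hpos.ne', mul_one]
    exact hζt
  have hwU : ∀ i t, 0 < w i t → t ∈ U i := by
    intro i t hw
    by_contra ht
    simp only [hwdef] at hw
    rw [hχzero i t ht, mul_zero, zero_div] at hw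
    exact lt_irrefl 0 hw
  -- the vector field
  set h : MPII → X := fun t => ∑ i ∈ T, w i t • v i with hhdef
  have hhcont : Continuous h :=
    continuous_finset_sum T fun i _ => (hwcont i).smul continuous_const
  have hhnorm : ∀ t, ‖h t‖ ≤ ∑ i ∈ T, w i t := by
    intro t
    calc ‖h t‖ ≤ ∑ i ∈ T, ‖w i t • v i‖ := norm_sum_le T _
      _ ≤ ∑ i ∈ T, w i t := by
          apply Finset.sum_le_sum
          intro i _
          rw [norm_smul, Real.norm_eq_abs, abs_of_nonneg (hwnonneg i t)]
          nlinarith [hv1' i, hwnonneg i t, norm_nonneg (v (i : MPII))]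
  have hhnorm1 : ∀ t, ‖h t‖ ≤ 1 := fun t => le_trans (hhnorm t) (hwsum_le t)
  have hhe : ∀ t : MPII, (t = mpe0 ∨ t = mpe1) → h t = 0 := by
    intro t ht
    have hz : ∀ i ∈ T, w i t • v (i : MPII) = 0 := by
      intro i _
      have htU : t ∉ U i := by
        rcases ht with rfl | rfl
        · intro hU; exact hU.2.1 rfl
        · intro hU; exact hU.2.2 rfl
      simp only [hwdef]
      rw [hχzero i t htU, mul_zero, zero_div, zero_smul]
    simp only [hhdef]
    exact Finset.sum_eq_zero hz
  -- the cutoff level β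
  have hβex : ∃ β : ℝ, 0 < β ∧ ∀ t, Φ - β ≤ f (γ t) → g t ≤ ρ/4 := by
    set B : Set MPII := {t | ρ/4 ≤ g t} with hBdef
    have hBclosed : IsClosed B := isClosed_le continuous_const hgcont
    by_cases hB : B.Nonempty
    · obtain ⟨tB, htB, hmax⟩ := hBclosed.isCompact.exists_isMaxOn hB hfγcont.continuousOn
      have htBM : tB ∉ M := by
        intro hm
        have : g tB = 0 := infDist_zero_of_mem hm
        rw [hBdef] at htB
        simp only [mem_setOf_eq] at htB
        rw [this] at htB
        linarith
      have hlt : f (γ tB) < Φ := by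
        rcases lt_or_eq_of_le (phi_le hf.continuous γ tB) with h | h
        · exact h
        · exact absurd h htBM
      refine ⟨(Φ - f (γ tB))/2, by linarith, ?_⟩
      intro t hft
      by_contra hgt
      push_neg at hgt
      have htB' : t ∈ B := le_of_lt hgt
      have h2 : f (γ t) ≤ f (γ tB) := hmax htB'
      linarith
    · refine ⟨1, one_pos, fun t _ => ?_⟩
      by_contra hgt
      push_neg at hgt
      exact hB ⟨t, le_of_lt hgt⟩
  obtain ⟨β, hβpos, hβprop⟩ := hβex
  -- uniform derivative bound on a compact tube
  set Cset : Set X := (fun p : MPII × ℝ => γ p.1 + p.2 • h p.1) '' (univ ×ˢ Icc 0 1)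
    with hCdef
  have hCcompact : IsCompact Cset := by
    apply (isCompact_univ.prod isCompact_Icc).image
    exact (γ.continuous.comp continuous_fst).add (continuous_snd.smul (hhcont.comp continuous_fst))
  obtain ⟨L0, hL0⟩ := hCcompact.exists_bound_of_continuousOn
    ((hf.continuous_fderiv one_ne_zero).continuousOn)
  set L : ℝ := max L0 1 with hLdef
  have hL1 : (1:ℝ) ≤ L := le_max_right L0 1
  have hL0le : L0 ≤ L := le_max_left L0 1
  have hLpos : 0 < L := lt_of_lt_of_le one_pos hL1
  -- minimal radius
  set rmin : ℝ := T.inf' hTne (fun i => r i) with hrmindef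
  have hrminpos : 0 < rmin := (Finset.lt_inf'_iff hTne).mpr fun i _ => hr0' i
  have hrminle : ∀ i ∈ T, rmin ≤ r i := fun i hi => Finset.inf'_le _ hi
  -- step size
  set s : ℝ := min (min 1 (rmin/2)) (β/(L+2*σ)) with hsdef
  have hspos : 0 < s := by
    apply lt_min (lt_min one_pos (by linarith))
    positivity
  have hs1 : s ≤ 1 := le_trans (min_le_left _ _) (min_le_left _ _)
  have hs2 : s ≤ rmin/2 := le_trans (min_le_left _ _) (min_le_right _ _)
  have hs3 : s ≤ β/(L+2*σ) := min_le_right _ _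
  -- derivative of f along the deformation
  have hcderiv : ∀ (t : MPII) (τ : ℝ), HasDerivAt (fun τ' => γ t + τ' • h t) (h t) τ := by
    intro t τ
    simpa using ((hasDerivAt_id τ).smul_const (h t)).const_add (γ t)
  have hφderiv : ∀ (t : MPII) (τ : ℝ),
      HasDerivAt (fun τ' => f (γ t + τ' • h t))
        (fderiv ℝ f (γ t + τ • h t) (h t)) τ := by
    intro t τ
    exact ((hf.differentiable one_ne_zero (γ t + τ • h t)).hasFDerivAt).comp_hasDerivAt τ
      (hcderiv t τ)
  have hform : ∀ (u : X) (t : MPII),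
      fderiv ℝ f u (h t) = ∑ i ∈ T, w i t * fderiv ℝ f u (v (i : MPII)) := by
    intro u t
    simp only [hhdef, map_sum, map_smul, smul_eq_mul]
  -- pointwise decrease
  have hpoint : ∀ t : MPII, f (γ t + s • h t) ≤ Φ - (3*σ/2) * s := by
    intro t
    rcases le_or_gt (Φ - β) (f (γ t)) with hcase | hcase
    · -- near the max set
      have hgt : g t ≤ ρ/4 := hβprop t hcase
      have hsum34 := hwsum_ge t hgt
      have hdb : ∀ τ ∈ Set.Icc (0:ℝ) s,
          fderiv ℝ f (γ t + τ • h t) (h t) ≤ -(3*σ/2) := by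
        intro τ hτ
        rw [hform]
        have hactive : ∀ i ∈ T, 0 < w i t →
            fderiv ℝ f (γ t + τ • h t) (v (i : MPII)) < -(2*σ) := by
          intro i hiT hw
          have htU := hwU i t hw
          have h1 : ‖γ t - γ (i : MPII)‖ < r i / 2 := htU.1
          apply hrball' i
          have heq : (γ t + τ • h t) - γ (i : MPII) = (γ t - γ (i : MPII)) + τ • h t := by
            abel
          rw [heq]
          calc ‖(γ t - γ (i : MPII)) + τ • h t‖
              ≤ ‖γ t - γ (i : MPII)‖ + ‖τ • h t‖ := norm_add_le _ _
            _ < r i / 2 + r i / 2 := by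
                apply add_lt_add_of_lt_of_le h1
                rw [norm_smul, Real.norm_eq_abs, abs_of_nonneg hτ.1]
                have h3 : τ * ‖h t‖ ≤ τ := by
                  nlinarith [hhnorm1 t, hτ.1, norm_nonneg (h t)]
                have h4 : τ ≤ s := hτ.2
                have h5 := hrminle i hiT
                linarith
            _ = r i := by ring
        calc ∑ i ∈ T, w i t * fderiv ℝ f (γ t + τ • h t) (v (i : MPII))
            ≤ ∑ i ∈ T, w i t * (-(2*σ)) := by
              apply Finset.sum_le_sum
              intro i hi
              rcases eq_or_lt_of_le (hwnonneg i t) with heq | hlt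
              · rw [← heq]; simp
              · exact mul_le_mul_of_nonneg_left (le_of_lt (hactive i hi hlt)) (hwnonneg i t)
          _ = (∑ i ∈ T, w i t) * (-(2*σ)) := by rw [← Finset.sum_mul]
          _ ≤ -(3*σ/2) := by nlinarith [hsum34, hwsum_le t]
      have hmvt := mvt_aux (fun τ' => f (γ t + τ' • h t))
        (fun τ => fderiv ℝ f (γ t + τ • h t) (h t)) s (-(3*σ/2)) hspos.le
        (fun τ _ => hφderiv t τ) hdb
      simp only [zero_smul, add_zero] at hmvt
      have hft : f (γ t) ≤ Φ := phi_le hf.continuous γ t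
      linarith
    · -- far below the max: crude bound
      have hdb : ∀ τ ∈ Set.Icc (0:ℝ) s,
          fderiv ℝ f (γ t + τ • h t) (h t) ≤ L := by
        intro τ hτ
        have hmem : γ t + τ • h t ∈ Cset :=
          ⟨(t, τ), ⟨mem_univ _, hτ.1, le_trans hτ.2 hs1⟩, rfl⟩
        have hLb : ‖fderiv ℝ f (γ t + τ • h t)‖ ≤ L0 := hL0 _ hmem
        have := (fderiv ℝ f (γ t + τ • h t)).le_opNorm (h t)
        have h2 : ‖fderiv ℝ f (γ t + τ • h t) (h t)‖ ≤ L0 := by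
          nlinarith [hhnorm1 t, norm_nonneg (fderiv ℝ f (γ t + τ • h t)),
            norm_nonneg (h t)]
        calc fderiv ℝ f (γ t + τ • h t) (h t)
            ≤ ‖fderiv ℝ f (γ t + τ • h t) (h t)‖ := le_abs_self _
          _ ≤ L0 := h2
          _ ≤ L := hL0le
      have hmvt := mvt_aux (fun τ' => f (γ t + τ' • h t))
        (fun τ => fderiv ℝ f (γ t + τ • h t) (h t)) s L hspos.le
        (fun τ _ => hφderiv t τ) hdb
      simp only [zero_smul, add_zero] at hmvt
      have hss : s * (L + 2*σ) ≤ β := by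
        rw [← le_div_iff₀ (by positivity)]
        exact hs3
      nlinarith [hspos, hσ]
  -- the deformed path
  set γ' : C(MPII, X) := ⟨fun t => γ t + s • h t,
    γ.continuous.add (continuous_const.smul hhcont)⟩ with hγ'def
  have he0 : γ' mpe0 = γ mpe0 := by
    simp only [hγ'def, ContinuousMap.coe_mk]
    rw [hhe mpe0 (Or.inl rfl), smul_zero, add_zero]
  have he1 : γ' mpe1 = γ mpe1 := by
    simp only [hγ'def, ContinuousMap.coe_mk]
    rw [hhe mpe1 (Or.inr rfl), smul_zero, add_zero]
  have hdist : dist γ γ' ≤ s := by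
    rw [ContinuousMap.dist_le hspos.le]
    intro t
    simp only [hγ'def, ContinuousMap.coe_mk]
    rw [dist_eq_norm]
    have heq : γ t - (γ t + s • h t) = -(s • h t) := by abel
    rw [heq, norm_neg, norm_smul, Real.norm_eq_abs, abs_of_nonneg hspos.le]
    nlinarith [hhnorm1 t, hspos]
  have hΦ' : PhiSup f γ' ≤ Φ - (3*σ/2)*s := phi_le_of_forall γ' (fun t => hpoint t)
  have hEK := hEk γ' he0 he1
  have : σ * dist γ γ' ≤ σ * s := mul_le_mul_of_nonneg_left hdist hσ.le
  nlinarith [hspos, hσ]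


end MPAux
theorem symmetric_mountain_pass
    {X : Type*} [NormedAddCommGroup X] [NormedSpace ℝ X] [CompleteSpace X]
    {V : Type*} [NormedAddCommGroup V] [NormedSpace ℝ V] [CompleteSpace V]
    {W : Type*} [NormedAddCommGroup W] [NormedSpace ℝ W] [CompleteSpace W]
    (ι : X →L[ℝ] V) (κ : V →L[ℝ] W)
    (K : ℝ) (hK : 0 < K) (hιK : ∀ u : X, ‖ι u‖ ≤ K * ‖u‖)
    (S : Set X)
    {P : Type*} [TopologicalSpace P] [PathConnectedSpace P]
    (pol : X → P → X) (sy : X → X)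
    (hpolS : ∀ u ∈ S, ∀ H : P, pol u H ∈ S)
    (hsyS : ∀ u : X, sy u ∈ S)
    (hpolCont : ContinuousOn (fun q : X × P => pol q.1 q.2) (S ×ˢ Set.univ))
    (hsypol : ∀ u ∈ S, ∀ H : P,
      pol (sy u) H = sy u ∧ sy (pol u H) = sy u ∧ pol (pol u H) H = pol u H)
    (happrox : ∃ Hs : ℕ → P, ∀ u ∈ S,
      Filter.Tendsto (fun m => ι (List.foldl pol u ((List.range m).map Hs)))
        Filter.atTop (nhds (ι (sy u))))
    (hpolContr : ∀ u ∈ S, ∀ v ∈ S, ∀ H : P, ‖ι (pol u H) - ι (pol v H)‖ ≤ ‖ι u - ι v‖)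
    (Θ : X → X) (CΘ : ℝ) (hCΘ : 0 < CΘ)
    (hΘS : ∀ u : X, Θ u ∈ S) (hΘid : ∀ u ∈ S, Θ u = u)
    (hΘlip : ∀ u v : X, ‖ι (Θ u) - ι (Θ v)‖ ≤ CΘ * ‖ι u - ι v‖)
    (hpolext : ∀ u : X, ∀ H : P, pol u H = pol (Θ u) H)
    (hsyext : ∀ u : X, sy u = sy (Θ u))
    (hΘcont : Continuous Θ)
    (hzeropol : ∀ H : P, pol 0 H = 0) (hzerosy : sy 0 = 0)
    (ψ : X) (hψS : ψ ∈ S) (hψpol : ∀ H : P, pol ψ H = ψ)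
    (f : X → ℝ) (hf : ContDiff ℝ 1 f)
    (hfpolX : ∀ u : X, ∀ H : P, f (pol u H) ≤ f u)
    (c : ℝ)
    (hc : c = sInf {r : ℝ | ∃ γ : ℝ → X, ContinuousOn γ (Set.Icc 0 1) ∧
      γ 0 = 0 ∧ γ 1 = ψ ∧ r = sSup (f '' (γ '' Set.Icc 0 1))})
    (hpaths : {r : ℝ | ∃ γ : ℝ → X, ContinuousOn γ (Set.Icc 0 1) ∧
      γ 0 = 0 ∧ γ 1 = ψ ∧ r = sSup (f '' (γ '' Set.Icc 0 1))}.Nonempty)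
    (hcgt : max (f 0) (f ψ) < c) :
    ∀ ε > (0:ℝ), ∃ uε : X,
      ‖ι uε - ι (sy uε)‖ < ε ∧
      ‖fderiv ℝ f uε‖ ≤ ε ∧
      c ≤ f uε ∧ f uε ≤ c + ε := by
  classical
  intro ε hε
  obtain ⟨Hs, hHs⟩ := happrox
  set theSet : Set ℝ := {r : ℝ | ∃ γ : ℝ → X, ContinuousOn γ (Set.Icc 0 1) ∧
      γ 0 = 0 ∧ γ 1 = ψ ∧ r = sSup (f '' (γ '' Set.Icc 0 1))} with htheSet
  -- every value in theSet is at least f 0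
  have hbddel : ∀ r ∈ theSet, f 0 ≤ r := by
    rintro r ⟨γp, hγcont, hγ0, hγ1, rfl⟩
    have hKc : IsCompact (γp '' Set.Icc 0 1) := isCompact_Icc.image_of_continuousOn hγcont
    have hKc2 : IsCompact (f '' (γp '' Set.Icc 0 1)) := hKc.image hf.continuous
    have hmem : f 0 ∈ f '' (γp '' Set.Icc 0 1) :=
      ⟨γp 0, ⟨0, by norm_num, rfl⟩, by rw [hγ0]⟩
    exact le_csSup hKc2.bddAbove hmem
  have hBdd : BddBelow theSet := ⟨f 0, fun r hr => hbddel r hr⟩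
  -- any continuous path in C(MPII, X) with the right endpoints gives a member of theSet
  have hproj0 : Set.projIcc (0:ℝ) 1 zero_le_one 0 = mpe0 := by
    rw [Set.projIcc_left]
    rfl
  have hproj1 : Set.projIcc (0:ℝ) 1 zero_le_one 1 = mpe1 := by
    rw [Set.projIcc_right]
    rfl
  have hmemset : ∀ p : C(MPII, X), p mpe0 = 0 → p mpe1 = ψ → PhiSup f p ∈ theSet := by
    intro p hp0 hp1
    refine ⟨fun x => p (Set.projIcc 0 1 zero_le_one x), ?_, ?_, ?_, ?_⟩
    · exact (p.continuous.comp continuous_projIcc).continuousOn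
    · show p (Set.projIcc 0 1 zero_le_one 0) = 0
      rw [hproj0]; exact hp0
    · show p (Set.projIcc 0 1 zero_le_one 1) = ψ
      rw [hproj1]; exact hp1
    · have himg : (fun x => p (Set.projIcc 0 1 zero_le_one x)) '' Set.Icc 0 1
          = Set.range p := by
        apply Set.Subset.antisymm
        · rintro u ⟨x, _, rfl⟩; exact ⟨_, rfl⟩
        · rintro u ⟨t, rfl⟩
          refine ⟨(t : ℝ), t.2, ?_⟩
          show p (Set.projIcc 0 1 zero_le_one (t : ℝ)) = p t
          rw [Set.projIcc_val]
      rw [himg]; rfl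
  have hcle : ∀ p : C(MPII, X), p mpe0 = 0 → p mpe1 = ψ → c ≤ PhiSup f p := by
    intro p hp0 hp1
    rw [hc]
    exact csInf_le hBdd (hmemset p hp0 hp1)
  -- foldl machinery
  have hfoldS : ∀ (l : List P) (u : X), u ∈ S → List.foldl pol u l ∈ S := by
    intro l
    induction l with
    | nil => intro u hu; simpa using hu
    | cons H l ih => intro u hu; simpa using ih _ (hpolS u hu H)
  have hfoldcontr : ∀ (l : List P) (u : X), u ∈ S → ∀ v : X, v ∈ S →
      ‖ι (List.foldl pol u l) - ι (List.foldl pol v l)‖ ≤ ‖ι u - ι v‖ := by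
    intro l
    induction l with
    | nil => intro u _ v _; simp
    | cons H l ih =>
      intro u hu v hv
      simp only [List.foldl_cons]
      exact le_trans (ih _ (hpolS u hu H) _ (hpolS v hv H)) (hpolContr u hu v hv H)
  have hfoldsy : ∀ (l : List P) (u : X), u ∈ S → sy (List.foldl pol u l) = sy u := by
    intro l
    induction l with
    | nil => intro u _; simp
    | cons H l ih =>
      intro u hu
      simp only [List.foldl_cons]
      rw [ih _ (hpolS u hu H), (hsypol u hu H).2.1]
  have hfoldf : ∀ (l : List P) (u : X), f (List.foldl pol u l) ≤ f u := by
    intro l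
    induction l with
    | nil => intro u; simp
    | cons H l ih =>
      intro u
      simp only [List.foldl_cons]
      exact le_trans (ih _) (hfpolX u H)
  have hfold0 : ∀ l : List P, List.foldl pol 0 l = 0 := by
    intro l
    induction l with
    | nil => simp
    | cons H l ih => simp only [List.foldl_cons]; rw [hzeropol H]; exact ih
  have hfoldψ : ∀ l : List P, List.foldl pol ψ l = ψ := by
    intro l
    induction l with
    | nil => simp
    | cons H l ih => simp only [List.foldl_cons]; rw [hψpol H]; exact ih
  have hfoldcont : ∀ (l : List P) (g : MPII → X), Continuous g → (∀ t, g t ∈ S) →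
      Continuous fun t => List.foldl pol (g t) l := by
    intro l
    induction l with
    | nil => intro g hg _; simpa using hg
    | cons H l ih =>
      intro g hg hgS
      simp only [List.foldl_cons]
      exact ih (fun t => pol (g t) H)
        (hpolCont.comp_continuous (hg.prodMk continuous_const)
          (fun t => ⟨hgS t, Set.mem_univ H⟩))
        (fun t => hpolS _ (hgS t) H)
  have hsycontr : ∀ u ∈ S, ∀ v ∈ S, ‖ι (sy u) - ι (sy v)‖ ≤ ‖ι u - ι v‖ := by
    intro u hu v hv
    have h1 := hHs u hu
    have h2 := hHs v hv
    have h3 : Filter.Tendsto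
        (fun m => ‖ι (List.foldl pol u ((List.range m).map Hs))
          - ι (List.foldl pol v ((List.range m).map Hs))‖)
        Filter.atTop (nhds ‖ι (sy u) - ι (sy v)‖) := (h1.sub h2).norm
    exact le_of_tendsto h3 (Filter.Eventually.of_forall fun m =>
      hfoldcontr _ u hu v hv)
  -- parameters
  set σ : ℝ := ε / 2 with hσdef
  have hσ : 0 < σ := by positivity
  set δ₀ : ℝ := min ε ((σ * ε) / (2 * K * (1 + CΘ))) with hδ₀def
  have hδ₀ : 0 < δ₀ := by
    apply lt_min hε
    positivity
  have hδ₀ε : δ₀ ≤ ε := min_le_left _ _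
  -- almost optimal path
  obtain ⟨r₀, hr₀mem, hr₀lt⟩ := Real.lt_sInf_add_pos hpaths hδ₀
  rw [← hc] at hr₀lt
  obtain ⟨γ₀p, hγ₀cont, hγ₀0, hγ₀1, hr₀eq⟩ := hr₀mem
  set γ₀C : C(MPII, X) := ⟨fun t => γ₀p (t : ℝ), hγ₀cont.restrict⟩ with hγ₀Cdef
  have hγ₀C0 : γ₀C mpe0 = 0 := hγ₀0
  have hγ₀C1 : γ₀C mpe1 = ψ := hγ₀1
  have hPhiγ₀ : PhiSup f γ₀C = r₀ := by
    rw [hr₀eq]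
    unfold PhiSup
    congr 1
    rw [Set.image_eq_range γ₀p (Set.Icc 0 1)]
    rfl
  -- base symmetrizable path
  set bm : MPII → X := fun t => Θ (γ₀C t) with hbmdef
  have hbmcont : Continuous bm := hΘcont.comp γ₀C.continuous
  have hbmS : ∀ t, bm t ∈ S := fun t => hΘS _
  set A : Set X := Set.range bm with hAdef
  have hAcompact : IsCompact A := isCompact_range hbmcont
  have hAS : ∀ u ∈ A, u ∈ S := by rintro u ⟨t, rfl⟩; exact hbmS t
  -- uniform convergence of iterated polarizations on A
  set η : ℝ := ε / 4 with hηdef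
  have hη : 0 < η := by positivity
  have hunif : ∃ m : ℕ, 1 ≤ m ∧ ∀ u ∈ A,
      ‖ι (List.foldl pol u ((List.range m).map Hs)) - ι (sy u)‖ < η := by
    set Wb : A → Set X := fun a => {u | ‖ι u - ι (a : X)‖ < η / 3} with hWdef
    have hWopen : ∀ a, IsOpen (Wb a) := fun a =>
      isOpen_lt (continuous_norm.comp ((ι.continuous.sub continuous_const))) continuous_const
    have hWcover : A ⊆ ⋃ a : A, Wb a := by
      intro u hu
      exact Set.mem_iUnion.mpr ⟨⟨u, hu⟩, by simp [hWdef]; positivity⟩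
    obtain ⟨T', hT'⟩ := hAcompact.elim_finite_subcover Wb hWopen hWcover
    have hEv : ∀ᶠ m in Filter.atTop, ∀ a ∈ T',
        ‖ι (List.foldl pol (a : X) ((List.range m).map Hs)) - ι (sy (a : X))‖ < η / 3 := by
      rw [Finset.eventually_all]
      intro a _
      have hten := hHs (a : X) (hAS _ a.2)
      obtain ⟨N, hN⟩ := Metric.tendsto_atTop.mp hten (η / 3) (by positivity)
      rw [Filter.eventually_atTop]
      exact ⟨N, fun m hm => by rw [← dist_eq_norm]; exact hN m hm⟩
    obtain ⟨m, hm1, hm2⟩ := ((Filter.eventually_ge_atTop 1).and hEv).exists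
    refine ⟨m, hm1, ?_⟩
    intro u hu
    obtain ⟨a, haT, haW⟩ := Set.mem_iUnion₂.mp (hT' hu)
    simp only [hWdef, Set.mem_setOf_eq] at haW
    have huS := hAS u hu
    have haS := hAS (a : X) a.2
    have t1 : ‖ι (List.foldl pol u ((List.range m).map Hs))
        - ι (List.foldl pol (a : X) ((List.range m).map Hs))‖ ≤ ‖ι u - ι (a : X)‖ :=
      hfoldcontr _ u huS _ haS
    have t2 := hm2 a haT
    have t3 : ‖ι (sy (a : X)) - ι (sy u)‖ ≤ ‖ι (a : X) - ι u‖ := hsycontr _ haS _ huS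
    have t4 : ‖ι (a : X) - ι u‖ = ‖ι u - ι (a : X)‖ := norm_sub_rev _ _
    have heq : ι (List.foldl pol u ((List.range m).map Hs)) - ι (sy u)
        = (ι (List.foldl pol u ((List.range m).map Hs))
            - ι (List.foldl pol (a : X) ((List.range m).map Hs)))
          + (ι (List.foldl pol (a : X) ((List.range m).map Hs)) - ι (sy (a : X)))
          + (ι (sy (a : X)) - ι (sy u)) := by abel
    have htri : ‖ι (List.foldl pol u ((List.range m).map Hs)) - ι (sy u)‖
        ≤ ‖ι (List.foldl pol u ((List.range m).map Hs))
            - ι (List.foldl pol (a : X) ((List.range m).map Hs))‖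
          + ‖ι (List.foldl pol (a : X) ((List.range m).map Hs)) - ι (sy (a : X))‖
          + ‖ι (sy (a : X)) - ι (sy u)‖ := by
      rw [heq]; exact norm_add₃_le
    linarith
  obtain ⟨m, hm1, hm2⟩ := hunif
  set lst : List P := (List.range m).map Hs with hlstdef
  set Γm : C(MPII, X) := ⟨fun t => List.foldl pol (bm t) lst,
    hfoldcont lst bm hbmcont hbmS⟩ with hΓmdef
  obtain ⟨k, rfl⟩ : ∃ k, m = k + 1 := ⟨m - 1, by omega⟩
  set lrest : List P := (List.range k).map (fun i => Hs (i + 1)) with hlrestdef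
  have hlst : lst = Hs 0 :: lrest := by
    simp [hlstdef, hlrestdef, List.range_succ_eq_map, List.map_map, Function.comp,
      Nat.succ_eq_add_one]
  have hΓm0 : Γm mpe0 = 0 := by
    show List.foldl pol (bm mpe0) lst = 0
    have hb0 : bm mpe0 = Θ 0 := by show Θ (γ₀C mpe0) = Θ 0; rw [hγ₀C0]
    rw [hb0, hlst]
    simp only [List.foldl_cons]
    rw [← hpolext 0 (Hs 0), hzeropol (Hs 0)]
    exact hfold0 lrest
  have hΓm1 : Γm mpe1 = ψ := by
    show List.foldl pol (bm mpe1) lst = ψ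
    have hb1 : bm mpe1 = ψ := by
      show Θ (γ₀C mpe1) = ψ
      rw [hγ₀C1]
      exact hΘid ψ hψS
    rw [hb1]
    exact hfoldψ lst
  have hΓmle : ∀ t, f (Γm t) ≤ f (γ₀C t) := by
    intro t
    show f (List.foldl pol (bm t) lst) ≤ _
    rw [hlst]
    simp only [List.foldl_cons]
    calc f (List.foldl pol (pol (bm t) (Hs 0)) lrest)
        ≤ f (pol (bm t) (Hs 0)) := hfoldf _ _
      _ = f (pol (γ₀C t) (Hs 0)) := by rw [← hpolext _ (Hs 0)]
      _ ≤ f (γ₀C t) := hfpolX _ _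
  have hΦΓm : PhiSup f Γm ≤ r₀ := by
    apply phi_le_of_forall
    intro t
    calc f (Γm t) ≤ f (γ₀C t) := hΓmle t
      _ ≤ PhiSup f γ₀C := phi_le hf.continuous γ₀C t
      _ = r₀ := hPhiγ₀
  -- the space of admissible paths
  set Sset : Set C(MPII, X) := {p | p mpe0 = 0 ∧ p mpe1 = ψ} with hSsetdef
  have hSclosed : IsClosed Sset := by
    have h1 : IsClosed {p : C(MPII, X) | p mpe0 = 0} :=
      isClosed_eq (continuous_eval_const mpe0) continuous_const
    have h2 : IsClosed {p : C(MPII, X) | p mpe1 = ψ} :=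
      isClosed_eq (continuous_eval_const mpe1) continuous_const
    exact h1.inter h2
  haveI : CompleteSpace Sset := hSclosed.completeSpace_coe
  set Φs : Sset → ℝ := fun p => PhiSup f (p : C(MPII, X)) with hΦsdef
  have hlscs : LowerSemicontinuous Φs := by
    intro p y hy
    exact (continuous_subtype_val.continuousAt).eventually
      (phi_lsc hf.continuous (p : C(MPII, X)) y hy)
  obtain ⟨z, hz1, hz2, hz3⟩ := my_ekeland Φs hlscs c
    (fun p => hcle (p : C(MPII, X)) p.2.1 p.2.2) σ hσ ⟨Γm, hΓm0, hΓm1⟩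
  set γb : C(MPII, X) := (z : C(MPII, X)) with hγbdef
  have hzb0 : γb mpe0 = 0 := z.2.1
  have hzb1 : γb mpe1 = ψ := z.2.2
  have hcleγb : c ≤ PhiSup f γb := hcle γb hzb0 hzb1
  have hΦz : PhiSup f γb ≤ PhiSup f Γm := hz1
  have hEk' : ∀ γ' : C(MPII, X), γ' mpe0 = γb mpe0 → γ' mpe1 = γb mpe1 →
      PhiSup f γb ≤ PhiSup f γ' + σ * dist γb γ' := by
    intro γ' h0 h1
    have hmem : γ' ∈ Sset := ⟨h0.trans hzb0, h1.trans hzb1⟩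
    have := hz3 ⟨γ', hmem⟩
    rwa [Subtype.dist_eq] at this
  have h0' : f (γb mpe0) < PhiSup f γb := by
    rw [hzb0]
    exact lt_of_lt_of_le (lt_of_le_of_lt (le_max_left _ _) hcgt) hcleγb
  have h1' : f (γb mpe1) < PhiSup f γb := by
    rw [hzb1]
    exact lt_of_lt_of_le (lt_of_le_of_lt (le_max_right _ _) hcgt) hcleγb
  obtain ⟨ts, hts1, hts2⟩ := minimax_deriv f hf γb σ hσ hEk' h0' h1'
  refine ⟨γb ts, ?_, ?_, ?_, ?_⟩
  · -- near-symmetry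
    set d : ℝ := dist Γm γb with hddef
    have hd0 : 0 ≤ d := dist_nonneg
    have hσd : σ * d < δ₀ := by
      have hde : dist (⟨Γm, hΓm0, hΓm1⟩ : Sset) z = d := Subtype.dist_eq _ _
      have h2 := hz2
      rw [hde] at h2
      have h3 : Φs ⟨Γm, hΓm0, hΓm1⟩ = PhiSup f Γm := rfl
      have h4 : Φs z = PhiSup f γb := rfl
      rw [h3, h4] at h2
      have : PhiSup f Γm - PhiSup f γb < δ₀ := by linarith [hΦΓm, hcleγb, hr₀lt]
      linarith
    have humS : Γm ts ∈ S := hfoldS lst _ (hbmS ts)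
    have hdpt : ‖Γm ts - γb ts‖ ≤ d := by
      rw [← dist_eq_norm]
      exact ContinuousMap.dist_apply_le_dist ts
    have hmid : ‖ι (Γm ts) - ι (sy (Γm ts))‖ < η := by
      have h5 := hm2 (bm ts) ⟨ts, rfl⟩
      have h6 : sy (Γm ts) = sy (bm ts) := hfoldsy lst _ (hbmS ts)
      show ‖ι (List.foldl pol (bm ts) lst) - ι (sy (Γm ts))‖ < η
      rw [h6]
      exact h5
    have ht1 : ‖ι (γb ts) - ι (Γm ts)‖ ≤ K * d := by
      have he : ι (γb ts) - ι (Γm ts) = ι (γb ts - Γm ts) := (map_sub ι _ _).symm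
      rw [he]
      calc ‖ι (γb ts - Γm ts)‖ ≤ K * ‖γb ts - Γm ts‖ := hιK _
        _ ≤ K * d := by
            apply mul_le_mul_of_nonneg_left _ hK.le
            rw [norm_sub_rev]
            exact hdpt
    have ht3 : ‖ι (sy (Γm ts)) - ι (sy (γb ts))‖ ≤ CΘ * (K * d) := by
      rw [hsyext (γb ts)]
      calc ‖ι (sy (Γm ts)) - ι (sy (Θ (γb ts)))‖
          ≤ ‖ι (Γm ts) - ι (Θ (γb ts))‖ := hsycontr _ humS _ (hΘS _)
        _ = ‖ι (Θ (Γm ts)) - ι (Θ (γb ts))‖ := by rw [hΘid _ humS]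
        _ ≤ CΘ * ‖ι (Γm ts) - ι (γb ts)‖ := hΘlip _ _
        _ ≤ CΘ * (K * d) := by
            apply mul_le_mul_of_nonneg_left _ hCΘ.le
            have he : ι (Γm ts) - ι (γb ts) = ι (Γm ts - γb ts) := (map_sub ι _ _).symm
            rw [he]
            calc ‖ι (Γm ts - γb ts)‖ ≤ K * ‖Γm ts - γb ts‖ := hιK _
              _ ≤ K * d := mul_le_mul_of_nonneg_left hdpt hK.le
    have heq2 : ι (γb ts) - ι (sy (γb ts))
        = (ι (γb ts) - ι (Γm ts)) + (ι (Γm ts) - ι (sy (Γm ts)))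
          + (ι (sy (Γm ts)) - ι (sy (γb ts))) := by abel
    have htri : ‖ι (γb ts) - ι (sy (γb ts))‖
        ≤ ‖ι (γb ts) - ι (Γm ts)‖ + ‖ι (Γm ts) - ι (sy (Γm ts))‖
          + ‖ι (sy (Γm ts)) - ι (sy (γb ts))‖ := by
      rw [heq2]; exact norm_add₃_le
    -- numeric conclusion
    have hKd : K * (1 + CΘ) * d < ε / 2 := by
      have hδ2 : δ₀ ≤ σ * ε / (2 * K * (1 + CΘ)) := min_le_right _ _
      have hpos : (0:ℝ) < 2 * K * (1 + CΘ) := by positivity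
      have h7 : σ * d * (2 * K * (1 + CΘ)) < σ * ε := by
        have h8 : σ * d < σ * ε / (2 * K * (1 + CΘ)) := lt_of_lt_of_le hσd hδ2
        calc σ * d * (2 * K * (1 + CΘ))
            < σ * ε / (2 * K * (1 + CΘ)) * (2 * K * (1 + CΘ)) :=
              mul_lt_mul_of_pos_right h8 hpos
          _ = σ * ε := by field_simp
      nlinarith [hσ, hd0]
    have hη4 : η = ε / 4 := rfl
    nlinarith [ht1, hmid, ht3, htri, hd0]
  · -- derivative bound
    have h2σ : 2 * σ = ε := by rw [hσdef]; ring
    rw [← h2σ]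
    exact hts2
  · rw [hts1]
    exact hcleγb
  · rw [hts1]
    have : PhiSup f γb ≤ r₀ := hΦz.trans hΦΓm
    linarith [hδ₀ε, hr₀lt]
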